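/- For real parameters ρ > 0 and β > ρ, Kummer's confluent hypergeometric function satisfies the asymptotic Φ(ρ, β; −x) ~ (Γ(β)/Γ(β − ρ)) · x^{−ρ} as x → +∞; that is, lim_{x→∞} x^{ρ} Φ(ρ, β; −x) = Γ(β)/Γ(β − ρ). -/

import Mathlib

open Filter MeasureTheory Set intervalIntegral Real Topology

lemma realBeta (a b : ℝ) (ha : 0 < a) (hb : 0 < b) :
    ∫ t in Ioo (0:ℝ) 1, t ^ (a-1) * (1-t) ^ (b-1) =
      Real.Gamma a * Real.Gamma b / Real.Gamma (a+b) := by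
  have key : Complex.Gamma a * Complex.Gamma b =
      Complex.Gamma (a+b) * Complex.betaIntegral a b := by
    push_cast
    exact Complex.Gamma_mul_Gamma_eq_betaIntegral (by simpa) (by simpa)
  have hBeta : Complex.betaIntegral a b =
      ((∫ t in Ioo (0:ℝ) 1, t ^ (a-1) * (1-t) ^ (b-1) : ℝ) : ℂ) := by
    rw [Complex.betaIntegral, intervalIntegral.integral_of_le zero_le_one,
      ← MeasureTheory.integral_Ioc_eq_integral_Ioo]
    have : ∫ (x : ℝ) in Ioc (0:ℝ) 1, (x:ℂ) ^ ((a:ℂ) - 1) * (1 - (x:ℂ)) ^ ((b:ℂ) - 1)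
        = ∫ (x : ℝ) in Ioc (0:ℝ) 1, ((x ^ (a-1) * (1-x) ^ (b-1) : ℝ) : ℂ) := by
      refine setIntegral_congr_ae measurableSet_Ioc ?_
      filter_upwards with t ht
      have h1 : (0:ℝ) ≤ t := le_of_lt ht.1
      have h2 : (0:ℝ) ≤ 1 - t := by linarith [ht.2]
      rw [show ((a:ℂ)-1) = ((a-1:ℝ):ℂ) by push_cast; ring,
        show ((b:ℂ)-1) = ((b-1:ℝ):ℂ) by push_cast; ring,
        show (1 - (t:ℂ)) = ((1-t:ℝ):ℂ) by push_cast; ring,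
        ← Complex.ofReal_cpow h1, ← Complex.ofReal_cpow h2]
      push_cast
      ring
    rw [this]; exact _root_.integral_ofReal
  rw [Complex.Gamma_ofReal, Complex.Gamma_ofReal, hBeta, ← Complex.ofReal_add,
    Complex.Gamma_ofReal] at key
  have hGab : Real.Gamma (a+b) ≠ 0 := (Real.Gamma_pos_of_pos (by linarith)).ne'
  field_simp
  rw [mul_comm]; exact_mod_cast key.symm

lemma gamma_pochhammer (a : ℝ) (ha : 0 < a) (n : ℕ) :
    Real.Gamma (a + n) = (ascPochhammer ℝ n).eval a * Real.Gamma a := by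
  induction n with
  | zero => simp
  | succ n ih =>
    have h1 : a + (n+1 : ℕ) = (a + n) + 1 := by push_cast; ring
    rw [h1, Real.Gamma_add_one (by positivity), ih, ascPochhammer_succ_eval]
    ring

lemma beta_integrable (a b : ℝ) (ha : 0 < a) (hb : 0 < b) :
    IntegrableOn (fun t : ℝ => t ^ (a-1) * (1-t) ^ (b-1)) (Ioo (0:ℝ) 1) := by
  have hC := Complex.betaIntegral_convergent (u := a) (v := b) (by simpa) (by simpa)
  rw [intervalIntegrable_iff_integrableOn_Ioc_of_le zero_le_one] at hC
  have hre : IntegrableOn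
      (fun x : ℝ => ((x:ℂ) ^ ((a:ℂ) - 1) * (1 - (x:ℂ)) ^ ((b:ℂ) - 1)).re)
      (Ioc (0:ℝ) 1) := hC.re
  refine ((hre.mono_set Ioo_subset_Ioc_self).congr_fun ?_ measurableSet_Ioo)
  intro t ht
  have h1 : (0:ℝ) ≤ t := le_of_lt ht.1
  have h2 : (0:ℝ) ≤ 1 - t := by linarith [ht.2]
  simp only
  rw [show ((a:ℂ)-1) = ((a-1:ℝ):ℂ) by push_cast; ring,
    show ((b:ℂ)-1) = ((b-1:ℝ):ℂ) by push_cast; ring,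
    show (1 - (t:ℂ)) = ((1-t:ℝ):ℂ) by push_cast; ring,
    ← Complex.ofReal_cpow h1, ← Complex.ofReal_cpow h2]
  simp [← Complex.ofReal_mul]

lemma rpow_half_bound {s e : ℝ} (h1 : 1/2 ≤ s) (h2 : s ≤ 1) :
    s ^ e ≤ (1/2:ℝ) ^ e + 1 := by
  rcases le_or_gt 0 e with he | he
  · have : s ^ e ≤ 1 := Real.rpow_le_one (by linarith) h2 he
    have h0 : (0:ℝ) ≤ (1/2:ℝ) ^ e := Real.rpow_nonneg (by norm_num) e
    linarith
  · have : s ^ e ≤ (1/2:ℝ) ^ e :=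
      antitoneOn_rpow_Ioi_of_exponent_nonpos he.le
        (by norm_num) (by simp only [mem_Ioi]; linarith) h1
    linarith

-- integrability of the full integrand for x ≥ 0
lemma exp_beta_integrable (ρ c : ℝ) (hρ : 0 < ρ) (hc : 0 < c)
    (hK : IntegrableOn (fun t : ℝ => t ^ (ρ-1) * (1-t) ^ (c-1)) (Ioo (0:ℝ) 1))
    {x : ℝ} (hx : 0 ≤ x) :
    IntegrableOn (fun t : ℝ => Real.exp (-x*t) * (t ^ (ρ-1) * (1-t) ^ (c-1)))
      (Ioo (0:ℝ) 1) := by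
  refine Integrable.bdd_mul (c := 1) hK ?_ ?_
  · exact (Real.continuous_exp.comp (continuous_const.mul continuous_id)).aestronglyMeasurable
  · filter_upwards [ae_restrict_mem measurableSet_Ioo] with t ht
    rw [Real.norm_eq_abs, abs_of_pos (Real.exp_pos _)]
    exact Real.exp_le_one_iff.2 (by nlinarith [ht.1])

lemma one_sub_integrable (c : ℝ) (hc : 0 < c) :
    IntegrableOn (fun t : ℝ => (1-t) ^ (c-1)) (Ico (1/2:ℝ) 1) := by
  have h := beta_integrable 1 c one_pos hc
  have heq : (fun t : ℝ => t ^ ((1:ℝ)-1) * (1-t) ^ (c-1)) = fun t : ℝ => (1-t) ^ (c-1) := by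
    funext t; rw [sub_self, Real.rpow_zero, one_mul]
  rw [heq] at h
  exact h.mono_set (fun t ht => ⟨by linarith [ht.1], ht.2⟩)

lemma tail_tendsto (ρ c : ℝ) (hρ : 0 < ρ) (hc : 0 < c) :
    Tendsto (fun x : ℝ => x^ρ * ∫ t in Ico (1/2:ℝ) 1,
      Real.exp (-x*t) * (t ^ (ρ-1) * (1-t) ^ (c-1))) atTop (𝓝 0) := by
  set M : ℝ := (1/2:ℝ) ^ (ρ-1) + 1 with hM
  set C₂ : ℝ := ∫ t in Ico (1/2:ℝ) 1, (1-t) ^ (c-1) with hC₂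
  have hC₂nn : 0 ≤ C₂ := setIntegral_nonneg measurableSet_Ico
    (fun t ht => Real.rpow_nonneg (by linarith [ht.2]) _)
  have hMnn : 0 ≤ M := by positivity
  have key : ∀ x : ℝ, 0 ≤ x →
      (∫ t in Ico (1/2:ℝ) 1, Real.exp (-x*t) * (t ^ (ρ-1) * (1-t) ^ (c-1)))
        ≤ Real.exp (-(1/2)*x) * (M * C₂) := by
    intro x hx
    have hint2 : IntegrableOn (fun t : ℝ => Real.exp (-(1/2)*x) * (M * (1-t) ^ (c-1)))
        (Ico (1/2:ℝ) 1) := (((one_sub_integrable c hc).const_mul M).const_mul _)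
    have hbd : ∀ t ∈ Ico (1/2:ℝ) 1,
        Real.exp (-x*t) * (t ^ (ρ-1) * (1-t) ^ (c-1))
          ≤ Real.exp (-(1/2)*x) * (M * (1-t) ^ (c-1)) := by
      intro t ht
      have h1 : Real.exp (-x*t) ≤ Real.exp (-(1/2)*x) :=
        Real.exp_le_exp.2 (by nlinarith [ht.1])
      have h2 : t ^ (ρ-1) ≤ M := rpow_half_bound ht.1 ht.2.le
      have h3 : (0:ℝ) ≤ (1-t) ^ (c-1) := Real.rpow_nonneg (by linarith [ht.2]) _
      have h4 : (0:ℝ) ≤ t ^ (ρ-1) := Real.rpow_nonneg (by linarith [ht.1]) _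
      calc Real.exp (-x*t) * (t ^ (ρ-1) * (1-t) ^ (c-1))
          ≤ Real.exp (-(1/2)*x) * (t ^ (ρ-1) * (1-t) ^ (c-1)) :=
            mul_le_mul_of_nonneg_right h1 (mul_nonneg h4 h3)
        _ ≤ Real.exp (-(1/2)*x) * (M * (1-t) ^ (c-1)) := by
            apply mul_le_mul_of_nonneg_left _ (Real.exp_pos _).le
            exact mul_le_mul_of_nonneg_right h2 h3
    calc (∫ t in Ico (1/2:ℝ) 1, Real.exp (-x*t) * (t ^ (ρ-1) * (1-t) ^ (c-1)))
        ≤ ∫ t in Ico (1/2:ℝ) 1, Real.exp (-(1/2)*x) * (M * (1-t) ^ (c-1)) := by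
          refine setIntegral_mono_on ?_ hint2 measurableSet_Ico hbd
          exact (exp_beta_integrable ρ c hρ hc (beta_integrable ρ c hρ hc) hx).mono_set
            (fun t ht => ⟨by linarith [ht.1], ht.2⟩)
      _ = Real.exp (-(1/2)*x) * (M * C₂) := by
          rw [MeasureTheory.integral_const_mul, MeasureTheory.integral_const_mul]
  have hzero : Tendsto (fun x : ℝ => (M * C₂) * (x^ρ * Real.exp (-(1/2)*x))) atTop (𝓝 0) := by
    have := tendsto_rpow_mul_exp_neg_mul_atTop_nhds_zero ρ (1/2) (by norm_num)
    simpa using this.const_mul (M * C₂)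
  refine squeeze_zero' ?_ ?_ hzero
  · filter_upwards [eventually_ge_atTop (0:ℝ)] with x hx
    refine mul_nonneg (Real.rpow_nonneg hx _) (setIntegral_nonneg measurableSet_Ico
      fun t ht => mul_nonneg (Real.exp_pos _).le (mul_nonneg
        (Real.rpow_nonneg (by linarith [ht.1]) _) (Real.rpow_nonneg (by linarith [ht.2]) _)))
  · filter_upwards [eventually_ge_atTop (0:ℝ)] with x hx
    calc x^ρ * ∫ t in Ico (1/2:ℝ) 1, Real.exp (-x*t) * (t ^ (ρ-1) * (1-t) ^ (c-1))
        ≤ x^ρ * (Real.exp (-(1/2)*x) * (M * C₂)) :=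
          mul_le_mul_of_nonneg_left (key x hx) (Real.rpow_nonneg hx _)
      _ = (M * C₂) * (x^ρ * Real.exp (-(1/2)*x)) := by ring

lemma subst_lemma (ρ c : ℝ) (hρ : 0 < ρ) (hc : 0 < c) {x : ℝ} (hx : 0 < x) :
    x^ρ * ∫ t in Ioo (0:ℝ) (1/2), Real.exp (-x*t) * (t ^ (ρ-1) * (1-t) ^ (c-1))
      = ∫ u in Ioo (0:ℝ) (x/2), Real.exp (-u) * (u ^ (ρ-1) * (1-u/x) ^ (c-1)) := by
  set H : ℝ → ℝ := fun u => Real.exp (-u) * ((u/x) ^ (ρ-1) * (1-u/x) ^ (c-1)) with hHdef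
  have hH : ∀ t : ℝ, H (x*t) = Real.exp (-x*t) * (t ^ (ρ-1) * (1-t) ^ (c-1)) := by
    intro t
    rw [hHdef]
    simp only [mul_div_cancel_left₀ _ hx.ne']
    rw [neg_mul]
  have step1 : (∫ t in Ioo (0:ℝ) (1/2), Real.exp (-x*t) * (t ^ (ρ-1) * (1-t) ^ (c-1)))
      = x⁻¹ * ∫ u in Ioo (0:ℝ) (x/2), H u := by
    rw [← MeasureTheory.integral_Ioc_eq_integral_Ioo,
      ← intervalIntegral.integral_of_le (by norm_num : (0:ℝ) ≤ 1/2)]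
    rw [show (∫ t in (0:ℝ)..(1/2), Real.exp (-x*t) * (t ^ (ρ-1) * (1-t) ^ (c-1)))
        = ∫ t in (0:ℝ)..(1/2), H (x*t) from
      intervalIntegral.integral_congr fun t _ => (hH t).symm]
    rw [intervalIntegral.integral_comp_mul_left H hx.ne']
    rw [mul_zero, show x * (1/2) = x/2 by ring, smul_eq_mul,
      intervalIntegral.integral_of_le (by positivity : (0:ℝ) ≤ x/2),
      MeasureTheory.integral_Ioc_eq_integral_Ioo]
  have step2 : (∫ u in Ioo (0:ℝ) (x/2), H u)
      = (x^(ρ-1))⁻¹ * ∫ u in Ioo (0:ℝ) (x/2),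
          Real.exp (-u) * (u ^ (ρ-1) * (1-u/x) ^ (c-1)) := by
    rw [← MeasureTheory.integral_const_mul]
    refine setIntegral_congr_ae measurableSet_Ioo ?_
    filter_upwards with u hu
    rw [hHdef]
    simp only
    rw [Real.div_rpow hu.1.le hx.le]
    field_simp
  rw [step1, step2]
  have hxρ : (0:ℝ) < x^(ρ-1) := Real.rpow_pos_of_pos hx _
  have hsplit : x^ρ = x * x^(ρ-1) := by
    nth_rewrite 2 [← Real.rpow_one x]
    rw [← Real.rpow_add hx]
    norm_num
  rw [hsplit]
  field_simp

lemma dct_lemma (ρ c : ℝ) (hρ : 0 < ρ) (hc : 0 < c) :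
    Tendsto (fun x : ℝ => ∫ u in Ioo (0:ℝ) (x/2),
        Real.exp (-u) * (u ^ (ρ-1) * (1-u/x) ^ (c-1)))
      atTop (𝓝 (Real.Gamma ρ)) := by
  set ν := volume.restrict (Ioi (0:ℝ)) with hν
  set M₂ : ℝ := (1/2:ℝ) ^ (c-1) + 1 with hM₂
  have hM₂nn : (0:ℝ) ≤ M₂ := by positivity
  set F : ℝ → ℝ → ℝ := fun x u => (Ioo (0:ℝ) (x/2)).indicator
    (fun u => Real.exp (-u) * (u ^ (ρ-1) * (1-u/x) ^ (c-1))) u with hFdef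
  have hrepr : ∀ x : ℝ, (∫ u in Ioo (0:ℝ) (x/2),
      Real.exp (-u) * (u ^ (ρ-1) * (1-u/x) ^ (c-1))) = ∫ u, F x u ∂ν := by
    intro x
    rw [hFdef]
    simp only
    rw [MeasureTheory.integral_indicator measurableSet_Ioo, hν,
      Measure.restrict_restrict measurableSet_Ioo,
      inter_eq_left.2 (fun u hu => hu.1)]
  have hbound_int : Integrable (fun u => M₂ * (Real.exp (-u) * u ^ (ρ-1))) ν :=
    (Real.GammaIntegral_convergent hρ).const_mul M₂
  have hmeas : ∀ᶠ x in atTop, AEStronglyMeasurable (F x) ν := by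
    filter_upwards [eventually_gt_atTop (0:ℝ)] with x hx
    rw [hFdef]
    simp only
    rw [aestronglyMeasurable_indicator_iff measurableSet_Ioo, hν,
      Measure.restrict_restrict measurableSet_Ioo,
      inter_eq_left.2 (fun u hu => hu.1)]
    refine ContinuousOn.aestronglyMeasurable ?_ measurableSet_Ioo
    intro u hu
    have h1 : (0:ℝ) < 1 - u/x := by
      have : u/x < 1 := by
        rw [div_lt_one hx]; nlinarith [hu.2]
      linarith
    refine ContinuousAt.continuousWithinAt ?_
    exact ((Real.continuous_exp.comp continuous_neg).continuousAt).mul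
      ((continuousAt_id.rpow_const (Or.inl hu.1.ne')).mul
        (((continuous_const.sub (continuous_id.div_const x)).continuousAt).rpow_const
          (Or.inl h1.ne')))
  have hbd : ∀ᶠ x in atTop, ∀ᵐ u ∂ν, ‖F x u‖ ≤ M₂ * (Real.exp (-u) * u ^ (ρ-1)) := by
    filter_upwards [eventually_gt_atTop (0:ℝ)] with x hx
    rw [hν]
    filter_upwards [ae_restrict_mem measurableSet_Ioi] with u hu
    have hb0 : (0:ℝ) ≤ M₂ * (Real.exp (-u) * u ^ (ρ-1)) := by
      have := Real.rpow_nonneg (le_of_lt hu) (ρ-1)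
      positivity
    rw [hFdef]
    simp only
    by_cases hmem : u ∈ Ioo (0:ℝ) (x/2)
    · rw [indicator_of_mem hmem]
      have hux : 0 < u/x := div_pos hmem.1 hx
      have hux2 : u/x ≤ 1/2 := by
        rw [div_le_div_iff₀ hx (by norm_num)]
        nlinarith [hmem.2]
      have h12 : 1/2 ≤ 1 - u/x := by linarith
      have h11 : 1 - u/x ≤ 1 := by linarith
      have hfac : (1-u/x) ^ (c-1) ≤ M₂ := rpow_half_bound h12 h11
      have hunn : (0:ℝ) ≤ u ^ (ρ-1) := Real.rpow_nonneg hu.le _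
      rw [Real.norm_eq_abs, abs_of_nonneg (by
        have : (0:ℝ) ≤ (1-u/x) ^ (c-1) := Real.rpow_nonneg (by linarith) _
        positivity)]
      calc Real.exp (-u) * (u ^ (ρ-1) * (1-u/x) ^ (c-1))
          ≤ Real.exp (-u) * (u ^ (ρ-1) * M₂) :=
            mul_le_mul_of_nonneg_left
              (mul_le_mul_of_nonneg_left hfac hunn) (Real.exp_pos _).le
        _ = M₂ * (Real.exp (-u) * u ^ (ρ-1)) := by ring
    · rw [indicator_of_notMem hmem]
      simpa using hb0
  have hlim : ∀ᵐ u ∂ν, Tendsto (fun x => F x u) atTop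
      (𝓝 (Real.exp (-u) * u ^ (ρ-1))) := by
    rw [hν]
    filter_upwards [ae_restrict_mem measurableSet_Ioi] with u hu
    have h1 : Tendsto (fun x : ℝ => u/x) atTop (𝓝 0) :=
      tendsto_const_nhds.div_atTop tendsto_id
    have h2 : Tendsto (fun x : ℝ => 1 - u/x) atTop (𝓝 1) := by
      simpa using tendsto_const_nhds.sub h1
    have h3 : Tendsto (fun x : ℝ => (1 - u/x) ^ (c-1)) atTop (𝓝 1) := by
      have hcont := (Real.continuousAt_rpow_const 1 (c-1) (Or.inl one_ne_zero)).tendsto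
      have := hcont.comp h2
      simpa [Real.one_rpow, Function.comp_def] using this
    have h4 : Tendsto (fun x : ℝ => Real.exp (-u) * (u ^ (ρ-1) * (1-u/x) ^ (c-1)))
        atTop (𝓝 (Real.exp (-u) * u ^ (ρ-1))) := by
      have := (tendsto_const_nhds (x := Real.exp (-u))).mul
        ((tendsto_const_nhds (x := u ^ (ρ-1))).mul h3)
      simpa using this
    refine h4.congr' ?_
    filter_upwards [eventually_gt_atTop (2*u)] with x hx
    rw [hFdef]
    simp only
    rw [indicator_of_mem (Set.mem_Ioo.2 ⟨hu, by linarith⟩)]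
  have := MeasureTheory.tendsto_integral_filter_of_dominated_convergence
    (μ := ν) (F := F) (f := fun u => Real.exp (-u) * u ^ (ρ-1))
    (bound := fun u => M₂ * (Real.exp (-u) * u ^ (ρ-1)))
    hmeas hbd hbound_int hlim
  rw [Real.Gamma_eq_integral hρ]
  exact (tendsto_congr hrepr).2 this

noncomputable def kummerPhi (a b z : ℝ) : ℝ :=
  ∑' n : ℕ, (ascPochhammer ℝ n).eval a / (ascPochhammer ℝ n).eval b * z^n / n.factorial

lemma kummer_repr (ρ β : ℝ) (hρ : 0 < ρ) (hβ : ρ < β) (x : ℝ) :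
    kummerPhi ρ β (-x) = Real.Gamma β / (Real.Gamma ρ * Real.Gamma (β-ρ)) *
      ∫ t in Ioo (0:ℝ) 1, Real.exp (-x*t) * (t ^ (ρ-1) * (1-t) ^ (β-ρ-1)) := by
  have hc : 0 < β - ρ := by linarith
  set c := β - ρ with hcdef
  set μ := volume.restrict (Ioo (0:ℝ) 1) with hμ
  set F : ℕ → ℝ → ℝ := fun n t => (-x)^n / n.factorial * (t^n * (t ^ (ρ-1) * (1-t) ^ (c-1)))
    with hF
  -- each F n is integrable and we know its integral
  have hFeq : ∀ n : ℕ, ∀ t ∈ Ioo (0:ℝ) 1,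
      t^n * (t ^ (ρ-1) * (1-t) ^ (c-1)) = t ^ ((ρ+n)-1) * (1-t) ^ (c-1) := by
    intro n t ht
    rw [show (ρ+n)-1 = (n:ℝ) + (ρ-1) by ring, Real.rpow_add ht.1, Real.rpow_natCast]
    ring
  have hFint : ∀ n : ℕ, Integrable (F n) μ := by
    intro n
    refine Integrable.const_mul ?_ _
    refine ((beta_integrable (ρ+n) c (by positivity) hc).congr_fun ?_ measurableSet_Ioo)
    intro t ht
    exact (hFeq n t ht).symm
  have hFval : ∀ n : ℕ, ∫ t, F n t ∂μ =
      (-x)^n / n.factorial *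
        (Real.Gamma (ρ+n) * Real.Gamma c / Real.Gamma (ρ+n+c)) := by
    intro n
    rw [hμ, MeasureTheory.integral_const_mul]
    congr 1
    rw [← realBeta (ρ+n) c (by positivity) hc]
    refine setIntegral_congr_ae measurableSet_Ioo ?_
    filter_upwards with t ht
    exact hFeq n t ht
  -- summability of integrals of norms
  have hK0 : IntegrableOn (fun t : ℝ => t ^ (ρ-1) * (1-t) ^ (c-1)) (Ioo (0:ℝ) 1) :=
    beta_integrable ρ c hρ hc
  set K : ℝ := ∫ t, (t ^ (ρ-1) * (1-t) ^ (c-1)) ∂μ with hKdef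
  have hnorm_le : ∀ n : ℕ, (∫ t, ‖F n t‖ ∂μ) ≤ |x|^n / n.factorial * K := by
    intro n
    have : ∀ᵐ t ∂μ, ‖F n t‖ ≤ |x|^n / n.factorial * (t ^ (ρ-1) * (1-t) ^ (c-1)) := by
      rw [hμ]
      filter_upwards [ae_restrict_mem measurableSet_Ioo] with t ht
      have h0t : (0:ℝ) < t := ht.1
      have h1t : t < 1 := ht.2
      have hb1 : (0:ℝ) ≤ t ^ (ρ-1) * (1-t) ^ (c-1) :=
        mul_nonneg (Real.rpow_nonneg h0t.le _) (Real.rpow_nonneg (by linarith) _)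
      rw [hF]
      simp only [Real.norm_eq_abs]
      rw [abs_mul, abs_div, abs_pow, abs_neg, Nat.abs_cast,
        abs_of_nonneg (mul_nonneg (pow_nonneg h0t.le n) hb1)]
      have htn : t^n ≤ 1 := pow_le_one₀ h0t.le h1t.le
      calc |x|^n / n.factorial * (t^n * (t ^ (ρ-1) * (1-t) ^ (c-1)))
          ≤ |x|^n / n.factorial * (1 * (t ^ (ρ-1) * (1-t) ^ (c-1))) := by
            apply mul_le_mul_of_nonneg_left _ (by positivity)
            exact mul_le_mul_of_nonneg_right htn hb1
        _ = |x|^n / n.factorial * (t ^ (ρ-1) * (1-t) ^ (c-1)) := by ring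
    calc (∫ t, ‖F n t‖ ∂μ) ≤ ∫ t, |x|^n / n.factorial * (t ^ (ρ-1) * (1-t) ^ (c-1)) ∂μ := by
          refine integral_mono_of_nonneg (Eventually.of_forall fun t => norm_nonneg _)
            (hK0.const_mul _) this
      _ = |x|^n / n.factorial * K := by rw [hKdef, MeasureTheory.integral_const_mul]
  have hsum_norm : Summable (fun n : ℕ => ∫ t, ‖F n t‖ ∂μ) := by
    refine Summable.of_nonneg_of_le (fun n => integral_nonneg fun t => norm_nonneg _)
      hnorm_le ?_
    exact (Real.summable_pow_div_factorial |x|).mul_right K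
  have hHasSum := MeasureTheory.hasSum_integral_of_summable_integral_norm hFint hsum_norm
  -- pointwise sum
  have hptsum : ∀ᵐ t ∂μ, (∑' n, F n t) = Real.exp (-x*t) * (t ^ (ρ-1) * (1-t) ^ (c-1)) := by
    rw [hμ]
    filter_upwards [ae_restrict_mem measurableSet_Ioo] with t ht
    have : ∀ n : ℕ, F n t = (-x*t)^n / n.factorial * (t ^ (ρ-1) * (1-t) ^ (c-1)) := by
      intro n
      rw [hF]; simp only [mul_pow]; ring
    rw [tsum_congr this, tsum_mul_right]
    congr 1
    rw [Real.exp_eq_exp_ℝ, NormedSpace.exp_eq_tsum_div]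
  -- put together
  have hint_eq : ∫ t, (∑' n, F n t) ∂μ =
      ∫ t, Real.exp (-x*t) * (t ^ (ρ-1) * (1-t) ^ (c-1)) ∂μ :=
    integral_congr_ae hptsum
  rw [hint_eq] at hHasSum
  have hΓρ : Real.Gamma ρ ≠ 0 := (Real.Gamma_pos_of_pos hρ).ne'
  have hΓc : Real.Gamma c ≠ 0 := (Real.Gamma_pos_of_pos hc).ne'
  have hΓβ : Real.Gamma β ≠ 0 := (Real.Gamma_pos_of_pos (by linarith)).ne'
  have htsum : kummerPhi ρ β (-x) =
      ∑' n, (Real.Gamma β / (Real.Gamma ρ * Real.Gamma c)) * ∫ t, F n t ∂μ := by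
    rw [kummerPhi]
    refine tsum_congr fun n => ?_
    rw [hFval n]
    have h1 : Real.Gamma (ρ+n) = (ascPochhammer ℝ n).eval ρ * Real.Gamma ρ :=
      gamma_pochhammer ρ hρ n
    have h2 : Real.Gamma (ρ+n+c) = (ascPochhammer ℝ n).eval β * Real.Gamma β := by
      rw [show ρ+(n:ℝ)+c = β+n by rw [hcdef]; ring]
      exact gamma_pochhammer β (by linarith) n
    have hevβ : (ascPochhammer ℝ n).eval β ≠ 0 :=
      (ascPochhammer_pos n β (by linarith)).ne'
    have hn : (n.factorial : ℝ) ≠ 0 := Nat.cast_ne_zero.2 n.factorial_ne_zero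
    rw [h1, h2]
    field_simp
  rw [htsum, tsum_mul_left, hHasSum.tsum_eq, hμ]

theorem kummer_asymptotics (ρ β : ℝ) (hρ : 0 < ρ) (hβ : ρ < β) :
    Tendsto (fun x : ℝ => x^ρ * kummerPhi ρ β (-x)) atTop
      (nhds (Real.Gamma β / Real.Gamma (β - ρ))) := by
  have hc : 0 < β - ρ := by linarith
  set C : ℝ := Real.Gamma β / (Real.Gamma ρ * Real.Gamma (β-ρ)) with hC
  have hΓρ : Real.Gamma ρ ≠ 0 := (Real.Gamma_pos_of_pos hρ).ne'
  have hΓc : Real.Gamma (β-ρ) ≠ 0 := (Real.Gamma_pos_of_pos hc).ne'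
  have T1 : Tendsto (fun x : ℝ => x^ρ * ∫ t in Ioo (0:ℝ) (1/2),
      Real.exp (-x*t) * (t ^ (ρ-1) * (1-t) ^ (β-ρ-1))) atTop (𝓝 (Real.Gamma ρ)) := by
    refine (dct_lemma ρ (β-ρ) hρ hc).congr' ?_
    filter_upwards [eventually_gt_atTop (0:ℝ)] with x hx
    exact (subst_lemma ρ (β-ρ) hρ hc hx).symm
  have T2 := tail_tendsto ρ (β-ρ) hρ hc
  have T : Tendsto (fun x : ℝ => C * ((x^ρ * ∫ t in Ioo (0:ℝ) (1/2),
        Real.exp (-x*t) * (t ^ (ρ-1) * (1-t) ^ (β-ρ-1)))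
      + (x^ρ * ∫ t in Ico (1/2:ℝ) 1,
        Real.exp (-x*t) * (t ^ (ρ-1) * (1-t) ^ (β-ρ-1)))))
      atTop (𝓝 (C * (Real.Gamma ρ + 0))) := ((T1.add T2).const_mul C)
  have hval : C * (Real.Gamma ρ + 0) = Real.Gamma β / Real.Gamma (β - ρ) := by
    rw [hC]; field_simp; ring
  rw [← hval]
  refine T.congr' ?_
  filter_upwards [eventually_gt_atTop (0:ℝ)] with x hx
  have hsplit : (∫ t in Ioo (0:ℝ) 1, Real.exp (-x*t) * (t ^ (ρ-1) * (1-t) ^ (β-ρ-1)))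
      = (∫ t in Ioo (0:ℝ) (1/2), Real.exp (-x*t) * (t ^ (ρ-1) * (1-t) ^ (β-ρ-1)))
      + (∫ t in Ico (1/2:ℝ) 1, Real.exp (-x*t) * (t ^ (ρ-1) * (1-t) ^ (β-ρ-1))) := by
    have hint := exp_beta_integrable ρ (β-ρ) hρ hc (beta_integrable ρ (β-ρ) hρ hc) hx.le
    rw [← Set.Ioo_union_Ico_eq_Ioo (by norm_num : (0:ℝ) < 1/2) (by norm_num : (1/2:ℝ) ≤ 1),
      MeasureTheory.setIntegral_union ?_ measurableSet_Ico
        (hint.mono_set (fun t ht => ⟨ht.1, by linarith [ht.2]⟩))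
        (hint.mono_set (fun t ht => ⟨by linarith [ht.1], ht.2⟩))]
    · exact disjoint_left.2 fun t ht ht' => absurd ht.2 (not_lt.2 ht'.1)
  rw [kummer_repr ρ β hρ hβ x, hsplit, ← hC]
  ring
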